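/- Let E be a real symmetric positive definite n×n matrix, and let s, z ∈ ℝⁿ with s ≠ 0 and zᵀs > 0. Then the modified BFGS update E⁺ = E − (E s sᵀ E)/(sᵀ E s) + (z zᵀ)/(zᵀ s) is symmetric positive definite. Consequently, if g ∈ ℝⁿ is nonzero and d solves E⁺ d = −g, then d is a descent direction: gᵀd < 0. -/

import Mathlib

open Matrix

private lemma symm_entry {n : ℕ} {E : Matrix (Fin n) (Fin n) ℝ} (hE : E.IsHermitian)
    (i j : Fin n) : E j i = E i j := by
  simpa using congrFun (congrFun hE.eq i) j

private lemma vecMul_symm {n : ℕ} {E : Matrix (Fin n) (Fin n) ℝ} (hE : E.IsHermitian)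
    (s : Fin n → ℝ) : s ᵥ* E = E *ᵥ s := by
  ext i
  simp only [vecMul, mulVec, dotProduct]
  refine Finset.sum_congr rfl fun j _ => ?_
  rw [symm_entry hE i j]; ring

private lemma vecMulVec_mulVec' {n : ℕ} (w v x : Fin n → ℝ) :
    (vecMulVec w v) *ᵥ x = (v ⬝ᵥ x) • w := by
  ext i
  simp only [vecMulVec_apply, mulVec, dotProduct, Finset.sum_mul, Pi.smul_apply, smul_eq_mul]
  exact Finset.sum_congr rfl fun j _ => by ring

private lemma dot_symm {n : ℕ} {E : Matrix (Fin n) (Fin n) ℝ} (hE : E.IsHermitian)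
    (x y : Fin n → ℝ) : x ⬝ᵥ E *ᵥ y = y ⬝ᵥ E *ᵥ x := by
  rw [dotProduct_mulVec, vecMul_symm hE, dotProduct_comm]

/-- **Positive definiteness of the modified BFGS update and descent directions.**
Let `E` be a real symmetric positive definite `n×n` matrix and `s, z ∈ ℝⁿ` with
`s ≠ 0` and `zᵀs > 0`.  Then `E⁺ = E − (E s sᵀ E)/(sᵀ E s) + (z zᵀ)/(zᵀ s)` is
symmetric positive definite; consequently, if `g ≠ 0` and `E⁺ d = −g`, then
`gᵀd < 0`, i.e. `d` is a descent direction. -/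
theorem stmt13 {n : ℕ} (E : Matrix (Fin n) (Fin n) ℝ) (hE : E.PosDef)
    (s z : Fin n → ℝ) (hs : s ≠ 0) (hzs : 0 < z ⬝ᵥ s)
    (Eplus : Matrix (Fin n) (Fin n) ℝ)
    (hEplus : Eplus =
      E - (s ⬝ᵥ E *ᵥ s)⁻¹ • vecMulVec (E *ᵥ s) (s ᵥ* E) + (z ⬝ᵥ s)⁻¹ • vecMulVec z z) :
    Eplus.PosDef ∧
    ∀ g d : Fin n → ℝ, g ≠ 0 → Eplus *ᵥ d = -g → g ⬝ᵥ d < 0 := by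
  have hEh := hE.1
  have hβ : 0 < s ⬝ᵥ E *ᵥ s := by simpa using hE.dotProduct_mulVec_pos hs
  set β := s ⬝ᵥ E *ᵥ s with hβdef
  set γ := z ⬝ᵥ s with hγdef
  have hse : s ᵥ* E = E *ᵥ s := vecMul_symm hEh s
  -- quadratic form of Eplus
  have hquad : ∀ x : Fin n → ℝ,
      x ⬝ᵥ Eplus *ᵥ x = x ⬝ᵥ E *ᵥ x - β⁻¹ * (x ⬝ᵥ E *ᵥ s) ^ 2 + γ⁻¹ * (z ⬝ᵥ x) ^ 2 := by
    intro x
    have h1 : (E *ᵥ s) ⬝ᵥ x = x ⬝ᵥ E *ᵥ s := by rw [dotProduct_comm]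
    rw [hEplus, hse, add_mulVec, sub_mulVec, smul_mulVec, smul_mulVec,
      vecMulVec_mulVec', vecMulVec_mulVec', dotProduct_add, dotProduct_sub,
      dotProduct_smul, dotProduct_smul, dotProduct_smul, dotProduct_smul]
    simp only [smul_eq_mul, h1]
    rw [dotProduct_comm x z]
    ring
  -- positivity of the quadratic form
  have hpos : ∀ x : Fin n → ℝ, x ≠ 0 → 0 < x ⬝ᵥ Eplus *ᵥ x := by
    intro x hx
    set α := x ⬝ᵥ E *ᵥ s with hα
    set y := x - (α / β) • s with hy
    have hyq : y ⬝ᵥ E *ᵥ y = x ⬝ᵥ E *ᵥ x - β⁻¹ * α ^ 2 := by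
      have hsx : s ⬝ᵥ E *ᵥ x = α := dot_symm hEh s x
      rw [hy]
      simp only [mulVec_sub, mulVec_smul, sub_dotProduct, dotProduct_sub, smul_dotProduct,
        dotProduct_smul, smul_eq_mul, hsx, ← hα, ← hβdef]
      field_simp
      ring
    have hzx2 : 0 ≤ γ⁻¹ * (z ⬝ᵥ x) ^ 2 :=
      mul_nonneg (inv_nonneg.mpr hzs.le) (sq_nonneg _)
    rw [hquad x]
    by_cases hy0 : y = 0
    · -- x is a multiple of s
      have hxs : x = (α / β) • s := by
        have := hy0; rw [hy, sub_eq_zero] at this; exact this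
      have hα0 : α ≠ 0 := by
        intro h
        apply hx
        rw [hxs, h, zero_div, zero_smul]
      have hzx : z ⬝ᵥ x = (α / β) * γ := by
        rw [hxs, dotProduct_smul, smul_eq_mul, hγdef]
      have hzero : x ⬝ᵥ E *ᵥ x - β⁻¹ * α ^ 2 = 0 := by
        rw [← hyq, hy0]; simp
      have hzx0 : z ⬝ᵥ x ≠ 0 := by
        rw [hzx]
        exact mul_ne_zero (div_ne_zero hα0 hβ.ne') hzs.ne'
      have : 0 < γ⁻¹ * (z ⬝ᵥ x) ^ 2 :=
        mul_pos (inv_pos.mpr hzs) (lt_of_le_of_ne (sq_nonneg _) (Ne.symm (pow_ne_zero 2 hzx0)))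
      linarith
    · have hyE : 0 < y ⬝ᵥ E *ᵥ y := by simpa using hE.dotProduct_mulVec_pos hy0
      linarith [hyq ▸ hyE, hzx2]
  -- Hermitian-ness of Eplus
  have hEplusH : Eplus.IsHermitian := by
    rw [hEplus, hse]
    have h1 : (β⁻¹ • vecMulVec (E *ᵥ s) (E *ᵥ s)).IsHermitian := by
      ext i j
      simp [vecMulVec_apply, mul_comm]
    have h2 : (γ⁻¹ • vecMulVec z z).IsHermitian := by
      ext i j
      simp [vecMulVec_apply, mul_comm]
    exact (hEh.sub h1).add h2
  have hPD : Eplus.PosDef := PosDef.of_dotProduct_mulVec_pos hEplusH (fun x hx => by simpa using hpos x hx)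
  refine ⟨hPD, fun g d hg hd => ?_⟩
  have hd0 : d ≠ 0 := by
    intro h
    apply hg
    rw [h, mulVec_zero] at hd
    simpa using hd.symm
  have : 0 < d ⬝ᵥ Eplus *ᵥ d := hpos d hd0
  have hgd : g ⬝ᵥ d = -(d ⬝ᵥ Eplus *ᵥ d) := by
    rw [← neg_neg g, ← hd, neg_dotProduct, dotProduct_comm]
  rw [hgd]
  linarith
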